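/- Let u(x) = (2π)^{-1/2} x^{-3/2} e^{-x/2} (Lévy density of the IG(1,1) subordinator) and U⁺(x) = ∫ₓ^∞ u(y)dy = √(2/(πx)) e^{-x/2} - erfc(√(x/2)). Then (U⁺)^{*3}(x) = 2√(2x/π) e^{-x/2}(2+x) - (2x² + 6x) erfc(√(x/2)) for all x > 0. -/

import Mathlib

open MeasureTheory Real

/-- Convolution of functions on `(0, ∞)`. -/
noncomputable def conv (f g : ℝ → ℝ) : ℝ → ℝ := fun x => ∫ y in (0:ℝ)..x, f y * g (x - y)

/-- `n`-fold convolution power (`convPow f 1 = f`). -/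
noncomputable def convPow (f : ℝ → ℝ) : ℕ → ℝ → ℝ
  | 0 => fun _ => 0
  | 1 => f
  | n + 2 => conv f (convPow f (n + 1))

/-- The complementary error function. -/
noncomputable def erfc (z : ℝ) : ℝ := (2 / Real.sqrt π) * ∫ t in Set.Ioi z, Real.exp (-t ^ 2)

namespace S11

noncomputable def cf (x : ℝ) : ℝ := erfc (Real.sqrt (x / 2))
noncomputable def aef (x : ℝ) : ℝ := Real.sqrt (2 / (π * x)) * Real.exp (-x / 2)
noncomputable def gg (x : ℝ) : ℝ := Real.sqrt (2 * x / π) * Real.exp (-x / 2)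

lemma gauss_integrable : Integrable (fun t : ℝ => Real.exp (-t ^ 2)) := by
  have := integrable_exp_neg_mul_sq (b := 1) one_pos
  simpa using this

lemma gauss_Ioi0 : ∫ t in Set.Ioi (0:ℝ), Real.exp (-t ^ 2) = Real.sqrt π / 2 := by
  have := integral_gaussian_Ioi 1
  simpa using this

lemma erfc_eq {z : ℝ} (hz : 0 ≤ z) :
    erfc z = 1 - (2 / Real.sqrt π) * ∫ t in (0:ℝ)..z, Real.exp (-t ^ 2) := by
  have hsplit : (∫ t in Set.Ioc 0 z, Real.exp (-t ^ 2)) + ∫ t in Set.Ioi z, Real.exp (-t ^ 2)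
      = ∫ t in Set.Ioi (0:ℝ), Real.exp (-t ^ 2) := by
    rw [← setIntegral_union]
    · rw [Set.Ioc_union_Ioi_eq_Ioi hz]
    · exact Set.Ioc_disjoint_Ioi le_rfl
    · exact measurableSet_Ioi
    · exact gauss_integrable.integrableOn
    · exact gauss_integrable.integrableOn
  rw [intervalIntegral.integral_of_le hz]
  have hπ : Real.sqrt π ≠ 0 := by positivity
  have : (∫ t in Set.Ioi z, Real.exp (-t ^ 2))
      = Real.sqrt π / 2 - ∫ t in Set.Ioc 0 z, Real.exp (-t ^ 2) := by
    rw [← gauss_Ioi0]; linarith [hsplit]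
  rw [erfc, this]
  field_simp

lemma continuous_cf : Continuous cf := by
  have h1 : Continuous fun z : ℝ => ∫ t in (0:ℝ)..z, Real.exp (-t ^ 2) :=
    intervalIntegral.continuous_primitive
      (fun a b => (Real.continuous_exp.comp (by continuity)).intervalIntegrable a b) 0
  have h2 : Continuous fun x : ℝ => Real.sqrt (x / 2) :=
    Real.continuous_sqrt.comp (by continuity)
  have : cf = fun x => 1 - (2 / Real.sqrt π) * ∫ t in (0:ℝ)..(Real.sqrt (x / 2)),
      Real.exp (-t ^ 2) := by
    funext x; rw [cf, erfc_eq (Real.sqrt_nonneg _)]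
  rw [this]
  exact continuous_const.sub (continuous_const.mul (h1.comp h2))

lemma cf_nonneg (x : ℝ) : 0 ≤ cf x := by
  rw [cf, erfc]
  apply mul_nonneg (by positivity)
  apply setIntegral_nonneg measurableSet_Ioi
  intro t _; positivity

lemma cf_le_one (x : ℝ) : cf x ≤ 1 := by
  rw [cf, erfc]
  have h1 : (∫ t in Set.Ioi (Real.sqrt (x / 2)), Real.exp (-t ^ 2))
      ≤ ∫ t in Set.Ioi (0:ℝ), Real.exp (-t ^ 2) := by
    apply setIntegral_mono_set gauss_integrable.integrableOn
    · exact Filter.Eventually.of_forall fun t => by positivity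
    · exact HasSubset.Subset.eventuallyLE (Set.Ioi_subset_Ioi (Real.sqrt_nonneg _))
  calc (2 / Real.sqrt π) * ∫ t in Set.Ioi (Real.sqrt (x / 2)), Real.exp (-t ^ 2)
      ≤ (2 / Real.sqrt π) * (Real.sqrt π / 2) := by
        apply mul_le_mul_of_nonneg_left _ (by positivity)
        rw [← gauss_Ioi0] at *; exact h1
    _ = 1 := by
        rw [div_mul_div_comm]
        rw [div_eq_one_iff_eq (by positivity)]
        ring

lemma hasDerivAt_cf {x : ℝ} (hx : 0 < x) : HasDerivAt cf (-(aef x) / 2) x := by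
  have hq : HasDerivAt (fun x : ℝ => Real.sqrt (x / 2)) (1 / (2 * Real.sqrt (x / 2)) * (1/2)) x := by
    have h1 : HasDerivAt (fun x : ℝ => x / 2) (1/2) x := (hasDerivAt_id x).div_const 2
    exact (Real.hasDerivAt_sqrt (by positivity)).comp x h1
  have her : HasDerivAt (fun z : ℝ => ∫ t in (0:ℝ)..z, Real.exp (-t ^ 2))
      (Real.exp (-(Real.sqrt (x / 2)) ^ 2)) (Real.sqrt (x / 2)) := by
    apply intervalIntegral.integral_hasDerivAt_right
    · exact ((Real.continuous_exp.comp (by continuity)).intervalIntegrable _ _)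
    · exact (Real.continuous_exp.comp (by continuity)).stronglyMeasurable.stronglyMeasurableAtFilter
    · exact (Real.continuous_exp.comp (by continuity)).continuousAt
  have hcomp := (her.comp x hq)
  have hcf : cf = fun x => 1 - (2 / Real.sqrt π) * ∫ t in (0:ℝ)..(Real.sqrt (x / 2)),
      Real.exp (-t ^ 2) := by
    funext y; rw [cf, erfc_eq (Real.sqrt_nonneg _)]
  rw [hcf]
  have := (hcomp.const_mul (2 / Real.sqrt π)).const_sub 1
  refine this.congr_deriv (Eq.symm ?_)
  rw [Real.sq_sqrt (by positivity : (0:ℝ) ≤ x / 2)]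
  rw [aef]
  have hs : Real.sqrt (x / 2) * Real.sqrt (2 / (π * x)) = Real.sqrt (1 / π) := by
    rw [← Real.sqrt_mul (by positivity)]
    congr 1
    field_simp
  have hπ : Real.sqrt π ≠ 0 := by positivity
  have hsx : Real.sqrt (x / 2) ≠ 0 := by positivity
  have h1π : Real.sqrt (1 / π) = 1 / Real.sqrt π := by
    rw [one_div, one_div, Real.sqrt_inv]
  rw [h1π] at hs
  have key : Real.sqrt (2 / (π * x)) = 1 / (Real.sqrt π * Real.sqrt (x / 2)) := by
    field_simp at hs ⊢; exact hs
  rw [key]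
  field_simp

lemma hasDerivAt_gg {x : ℝ} (hx : 0 < x) : HasDerivAt gg (aef x / 2 - gg x / 2) x := by
  have hs : HasDerivAt (fun x : ℝ => Real.sqrt (2 * x / π)) (1 / (2 * Real.sqrt (2 * x / π)) * (2 / π)) x := by
    have h1 : HasDerivAt (fun x : ℝ => 2 * x / π) (2 / π) x := by
      simpa using ((hasDerivAt_id x).const_mul 2).div_const π
    exact (Real.hasDerivAt_sqrt (by positivity)).comp x h1
  have hE : HasDerivAt (fun x : ℝ => Real.exp (-x / 2)) (Real.exp (-x / 2) * (-1 / 2)) x := by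
    have h1 : HasDerivAt (fun x : ℝ => -x / 2) (-1 / 2) x := by
      simpa using ((hasDerivAt_id x).neg).div_const 2
    exact (Real.hasDerivAt_exp _).comp x h1
  have := hs.mul hE
  refine this.congr_deriv (Eq.symm ?_)
  rw [aef, gg]
  have hsx : Real.sqrt (2 * x / π) ≠ 0 := by positivity
  have key : Real.sqrt (2 / (π * x)) = (2 / π) / Real.sqrt (2 * x / π) := by
    rw [eq_div_iff hsx, ← Real.sqrt_mul (by positivity)]
    have : 2 / (π * x) * (2 * x / π) = (2 / π) ^ 2 := by
      field_simp
    rw [this, Real.sqrt_sq (by positivity)]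
  rw [key]
  field_simp
  ring

lemma continuous_gg : Continuous gg := by
  apply Continuous.mul _ (Real.continuous_exp.comp (by continuity))
  exact Real.continuous_sqrt.comp (by continuity)

lemma measurable_aef : Measurable aef := by
  apply Measurable.mul _ (Real.continuous_exp.comp (by continuity)).measurable
  exact Real.continuous_sqrt.measurable.comp (measurable_const.div (measurable_const.mul measurable_id))

lemma aef_nonneg (x : ℝ) : 0 ≤ aef x := mul_nonneg (Real.sqrt_nonneg _) (Real.exp_pos _).le

lemma aef_le (y : ℝ) (hy : 0 ≤ y) : aef y ≤ Real.sqrt (2 / π) * (1 / Real.sqrt y) := by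
  rw [aef]
  have h1 : Real.sqrt (2 / (π * y)) = Real.sqrt (2 / π) * (1 / Real.sqrt y) := by
    rw [mul_one_div, ← Real.sqrt_div (by positivity)]
    congr 1
    rw [div_div]
  rw [h1]
  have h2 : Real.exp (-y / 2) ≤ 1 := Real.exp_le_one_iff.2 (by linarith)
  calc Real.sqrt (2 / π) * (1 / Real.sqrt y) * Real.exp (-y / 2)
      ≤ Real.sqrt (2 / π) * (1 / Real.sqrt y) * 1 := by
        apply mul_le_mul_of_nonneg_left h2 (by positivity)
    _ = _ := mul_one _

lemma intervalIntegrable_invsqrt {b : ℝ} (hb : 0 ≤ b) :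
    IntervalIntegrable (fun y : ℝ => 1 / Real.sqrt y) volume 0 b := by
  have h := intervalIntegral.intervalIntegrable_rpow' (a := 0) (b := b) (r := -(1/2)) (by norm_num)
  apply h.congr
  intro y hy; dsimp only
  rw [Set.uIoc_of_le hb, Set.mem_Ioc] at hy
  rw [Real.sqrt_eq_rpow, Real.rpow_neg hy.1.le]; norm_num

lemma intervalIntegrable_aef {b : ℝ} (hb : 0 ≤ b) : IntervalIntegrable aef volume 0 b := by
  apply IntervalIntegrable.mono_fun ((intervalIntegrable_invsqrt hb).const_mul (Real.sqrt (2 / π)))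
    measurable_aef.aestronglyMeasurable
  filter_upwards [ae_restrict_mem measurableSet_uIoc] with y hy
  rw [Set.uIoc_of_le hb, Set.mem_Ioc] at hy
  rw [Real.norm_eq_abs, Real.norm_eq_abs, abs_of_nonneg (aef_nonneg y), abs_of_nonneg (by positivity)]
  exact aef_le y hy.1.le

lemma intervalIntegrable_beta {x : ℝ} (hx : 0 < x) :
    IntervalIntegrable (fun y : ℝ => 1 / Real.sqrt (y * (x - y))) volume 0 x := by
  have h1 : IntervalIntegrable
      (fun y : ℝ => Real.sqrt (2/x) * (1 / Real.sqrt y + 1 / Real.sqrt (x - y))) volume 0 x := by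
    apply IntervalIntegrable.const_mul
    apply (intervalIntegrable_invsqrt hx.le).add
    have h2 := (intervalIntegrable_invsqrt hx.le).comp_sub_left x
    simpa using h2.symm
  apply IntervalIntegrable.mono_fun h1
  · apply Measurable.aestronglyMeasurable
    apply Measurable.div measurable_const
    exact Real.continuous_sqrt.measurable.comp (measurable_id.mul (measurable_const.sub measurable_id))
  filter_upwards [ae_restrict_mem measurableSet_uIoc] with y hy
  rw [Set.uIoc_of_le hx.le, Set.mem_Ioc] at hy
  obtain ⟨hy0, hyx⟩ := hy
  rw [Real.norm_eq_abs, Real.norm_eq_abs, abs_of_nonneg (by positivity), abs_of_nonneg (by positivity)]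
  have gen : ∀ a b : ℝ, 0 < a → 0 < b → 1 ≤ Real.sqrt (2/x) * Real.sqrt b →
      1 / Real.sqrt (a*b) ≤ Real.sqrt (2/x) * (1 / Real.sqrt a) := by
    intro a b ha hb hkey
    rw [Real.sqrt_mul ha.le, mul_one_div, div_le_div_iff₀ (by positivity) (by positivity)]
    nlinarith [Real.sqrt_pos.2 ha, Real.sqrt_pos.2 hb, Real.sqrt_nonneg (2/x)]
  rcases eq_or_lt_of_le hyx with rfl | hylt
  · simp only [sub_self, mul_zero, Real.sqrt_zero, div_zero]
    positivity
  rcases le_or_gt y (x/2) with hc | hc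
  · have hkey : 1 ≤ Real.sqrt (2/x) * Real.sqrt (x - y) := by
      rw [← Real.sqrt_mul (by positivity)]
      have h2 : (1:ℝ) ≤ 2/x * (x - y) := by
        rw [div_mul_eq_mul_div, le_div_iff₀ hx]; linarith
      simpa using Real.one_le_sqrt.2 h2
    calc 1 / Real.sqrt (y * (x - y)) ≤ Real.sqrt (2/x) * (1 / Real.sqrt y) :=
          gen y (x - y) hy0 (by linarith) hkey
      _ ≤ _ := by
          apply mul_le_mul_of_nonneg_left _ (Real.sqrt_nonneg _)
          apply le_add_of_nonneg_right; positivity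
  · have hkey : 1 ≤ Real.sqrt (2/x) * Real.sqrt y := by
      rw [← Real.sqrt_mul (by positivity)]
      have h2 : (1:ℝ) ≤ 2/x * y := by
        rw [div_mul_eq_mul_div, le_div_iff₀ hx]; linarith
      simpa using Real.one_le_sqrt.2 h2
    calc 1 / Real.sqrt (y * (x - y)) = 1 / Real.sqrt ((x - y) * y) := by rw [mul_comm]
      _ ≤ Real.sqrt (2/x) * (1 / Real.sqrt (x - y)) := gen (x - y) y (by linarith) hy0 hkey
      _ ≤ _ := by
          apply mul_le_mul_of_nonneg_left _ (Real.sqrt_nonneg _)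
          apply le_add_of_nonneg_left; positivity

lemma integral_beta {x : ℝ} (hx : 0 < x) :
    ∫ y in (0:ℝ)..x, 1 / Real.sqrt (y * (x - y)) = π := by
  have hF : ∀ y ∈ Set.Ioo (0:ℝ) x,
      HasDerivWithinAt (fun y : ℝ => 2 * Real.arcsin (Real.sqrt (y / x)))
        (1 / Real.sqrt (y * (x - y))) (Set.Ioi y) y := by
    intro y hy
    obtain ⟨hy0, hyx⟩ := hy
    have hs : HasDerivAt (fun y : ℝ => Real.sqrt (y / x)) (1 / (2 * Real.sqrt (y / x)) * (1/x)) y := by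
      have h1 : HasDerivAt (fun y : ℝ => y / x) (1/x) y := by
        simpa using (hasDerivAt_id y).div_const x
      exact (Real.hasDerivAt_sqrt (by positivity)).comp y h1
    have hlt1 : Real.sqrt (y / x) < 1 := by
      rw [show (1:ℝ) = Real.sqrt 1 by simp]
      apply Real.sqrt_lt_sqrt (by positivity)
      rw [div_lt_one hx]; exact hyx
    have hasin : HasDerivAt Real.arcsin (1 / Real.sqrt (1 - Real.sqrt (y / x) ^ 2))
        (Real.sqrt (y / x)) :=
      Real.hasDerivAt_arcsin ((neg_one_lt_zero.trans_le (Real.sqrt_nonneg _)).ne') (ne_of_lt hlt1)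
    have hcomp := (hasin.comp y hs).const_mul 2
    apply HasDerivAt.hasDerivWithinAt
    refine hcomp.congr_deriv (Eq.symm ?_)
    rw [Real.sq_sqrt (by positivity : (0:ℝ) ≤ y / x)]
    have key : Real.sqrt (1 - y / x) * Real.sqrt (y / x) * x = Real.sqrt (y * (x - y)) := by
      rw [← Real.sqrt_mul (sub_nonneg.2 ((div_le_one hx).2 hyx.le))]
      rw [show (1 - y/x) * (y/x) = y * (x - y) / x^2 by field_simp]
      rw [Real.sqrt_div (by nlinarith) (x^2), Real.sqrt_sq hx.le]
      field_simp
    rw [← key]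
    have h1 : Real.sqrt (1 - y/x) > 0 := by
      apply Real.sqrt_pos.2; rw [sub_pos, div_lt_one hx]; exact hyx
    have h2 : Real.sqrt (y/x) > 0 := Real.sqrt_pos.2 (by positivity)
    field_simp
  have hcont : ContinuousOn (fun y : ℝ => 2 * Real.arcsin (Real.sqrt (y / x))) (Set.Icc 0 x) := by
    apply Continuous.continuousOn
    exact continuous_const.mul (Real.continuous_arcsin.comp (Real.continuous_sqrt.comp (continuous_id.div_const x)))
  have := intervalIntegral.integral_eq_sub_of_hasDeriv_right_of_le hx.le hcont hF
    (intervalIntegrable_beta hx)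
  rw [this]
  rw [div_self hx.ne', Real.sqrt_one, Real.arcsin_one]
  simp [Real.arcsin_zero]
  ring

lemma icongr {a b : ℝ} (hab : a ≤ b) {f g : ℝ → ℝ} (h : ∀ s ∈ Set.Ioc a b, f s = g s) :
    ∫ s in a..b, f s = ∫ s in a..b, g s := by
  apply intervalIntegral.integral_congr_ae
  rw [Set.uIoc_of_le hab]
  exact Filter.Eventually.of_forall h

lemma aef_zero : aef 0 = 0 := by
  rw [aef]; norm_num

lemma aefaef_eq {x : ℝ} (hx : 0 < x) : ∀ y ∈ Set.Ioc (0:ℝ) x,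
    aef y * aef (x - y) = 2 / π * Real.exp (-x / 2) * (1 / Real.sqrt (y * (x - y))) := by
  intro y hy
  obtain ⟨hy0, hyx⟩ := hy
  rcases eq_or_lt_of_le hyx with rfl | hylt
  · simp [aef_zero, Real.sqrt_eq_zero']
  have hxy : 0 < x - y := by linarith
  rw [aef, aef]
  have hsq : Real.sqrt (2 / (π * y)) * Real.sqrt (2 / (π * (x - y)))
      = 2 / π * (1 / Real.sqrt (y * (x - y))) := by
    rw [← Real.sqrt_mul (by positivity)]
    rw [show 2 / (π * y) * (2 / (π * (x - y))) = (2/π)^2 * (1 / (y * (x - y))) by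
      field_simp]
    rw [Real.sqrt_mul (by positivity), Real.sqrt_sq (by positivity), one_div, Real.sqrt_inv, one_div]
  have hexp : Real.exp (-y / 2) * Real.exp (-(x - y) / 2) = Real.exp (-x / 2) := by
    rw [← Real.exp_add]; congr 1; ring
  calc Real.sqrt (2 / (π * y)) * Real.exp (-y / 2) * (Real.sqrt (2 / (π * (x - y))) * Real.exp (-(x - y) / 2))
      = (Real.sqrt (2 / (π * y)) * Real.sqrt (2 / (π * (x - y)))) * (Real.exp (-y / 2) * Real.exp (-(x - y) / 2)) := by ring
    _ = _ := by rw [hsq, hexp]; ring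

lemma intervalIntegrable_aefaef {x : ℝ} (hx : 0 < x) :
    IntervalIntegrable (fun y => aef y * aef (x - y)) volume 0 x := by
  apply ((intervalIntegrable_beta hx).const_mul (2 / π * Real.exp (-x/2))).congr
  intro y hy
  rw [Set.uIoc_of_le hx.le] at hy
  exact (aefaef_eq hx y hy).symm

lemma conv_aef_aef {x : ℝ} (hx : 0 < x) :
    ∫ y in (0:ℝ)..x, aef y * aef (x - y) = 2 * Real.exp (-x / 2) := by
  rw [icongr hx.le (aefaef_eq hx)]
  rw [intervalIntegral.integral_const_mul, integral_beta hx]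
  field_simp

lemma swap_lemma {x : ℝ} (hx : 0 < x) {f g G : ℝ → ℝ}
    (hfm : Measurable f) (hgm : Measurable g)
    (hfi : IntegrableOn f (Set.Ioc 0 x)) (hgi : IntegrableOn g (Set.Ioc 0 x))
    (hG : ∀ z, 0 ≤ z → z ≤ x → G z = ∫ t in (0:ℝ)..z, g t) :
    ∫ y in (0:ℝ)..x, f y * G (x - y)
      = ∫ s in (0:ℝ)..x, ∫ y in (0:ℝ)..s, f y * g (s - y) := by
  set μ := volume.restrict (Set.Ioc (0:ℝ) x) with hμ
  set F : ℝ → ℝ → ℝ := fun y s => if y < s then f y * g (s - y) else 0 with hF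
  have hFu : Function.uncurry F = fun p : ℝ × ℝ => if p.1 < p.2 then f p.1 * g (p.2 - p.1) else 0 := rfl
  have hFm : Measurable (Function.uncurry F) := by
    rw [hFu]
    apply Measurable.ite (measurableSet_lt measurable_fst measurable_snd)
    · exact (hfm.comp measurable_fst).mul (hgm.comp (measurable_snd.sub measurable_fst))
    · exact measurable_const
  -- set identities
  have SA : ∀ y : ℝ, 0 < y → Set.Ioi y ∩ Set.Ioc 0 x = Set.Ioc y x := by
    intro y hy0
    ext t
    simp only [Set.mem_inter_iff, Set.mem_Ioi, Set.mem_Ioc]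
    exact ⟨fun ⟨h1, _, h3⟩ => ⟨h1, h3⟩, fun ⟨h1, h2⟩ => ⟨h1, hy0.trans h1, h2⟩⟩
  have SB : ∀ s : ℝ, s ≤ x → Set.Iio s ∩ Set.Ioc 0 x = Set.Ioo 0 s := by
    intro s hsx
    ext t
    simp only [Set.mem_inter_iff, Set.mem_Iio, Set.mem_Ioc, Set.mem_Ioo]
    exact ⟨fun ⟨h1, h2, _⟩ => ⟨h2, h1⟩, fun ⟨h1, h2⟩ => ⟨h2, h1, (h2.le.trans hsx)⟩⟩
  -- slice integrability
  have hslice : ∀ y : ℝ, y ∈ Set.Ioc (0:ℝ) x → Integrable (fun s => F y s) μ := by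
    intro y hy
    obtain ⟨hy0, hyx⟩ := hy
    have hind : (fun s => F y s) = Set.indicator (Set.Ioi y) (fun s => f y * g (s - y)) := by
      funext s
      rw [Set.indicator_apply, hF]
      simp only [Set.mem_Ioi]
    rw [hind, hμ, integrable_indicator_iff measurableSet_Ioi]
    rw [IntegrableOn, Measure.restrict_restrict measurableSet_Ioi, SA y hy0]
    have h1 : IntervalIntegrable (fun s => g (s - y)) volume y x := by
      have h2 : IntervalIntegrable g volume 0 (x - y) := by
        rw [intervalIntegrable_iff_integrableOn_Ioc_of_le (by linarith)]
        exact hgi.mono_set (Set.Ioc_subset_Ioc le_rfl (by linarith))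
      simpa using h2.comp_sub_right y
    rw [intervalIntegrable_iff_integrableOn_Ioc_of_le hyx] at h1
    exact (h1.const_mul (f y))
  -- product integrability
  set Cg : ℝ := ∫ t in Set.Ioc (0:ℝ) x, ‖g t‖ with hCg
  have hnormeq : ∀ y : ℝ, y ∈ Set.Ioc (0:ℝ) x →
      ∫ s, ‖F y s‖ ∂μ = ‖f y‖ * ∫ t in Set.Ioc 0 (x - y), ‖g t‖ := by
    intro y hy
    obtain ⟨hy0, hyx⟩ := hy
    have hind : (fun s => ‖F y s‖) = Set.indicator (Set.Ioi y) (fun s => ‖f y‖ * ‖g (s - y)‖) := by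
      funext s
      rw [Set.indicator_apply, hF]
      simp only [Set.mem_Ioi]
      split_ifs with h
      · rw [norm_mul]
      · simp
    rw [hind, hμ, integral_indicator measurableSet_Ioi,
      Measure.restrict_restrict measurableSet_Ioi, SA y hy0,
      ← intervalIntegral.integral_of_le hyx, intervalIntegral.integral_const_mul]
    congr 1
    have := intervalIntegral.integral_comp_sub_right (fun t => ‖g t‖) y (a := y) (b := x)
    simp only [sub_self] at this
    rw [this, intervalIntegral.integral_of_le (by linarith)]
  have hprod : Integrable (Function.uncurry F) (μ.prod μ) := by
    rw [integrable_prod_iff hFm.aestronglyMeasurable]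
    constructor
    · rw [hμ, ae_restrict_iff' measurableSet_Ioc]
      exact Filter.Eventually.of_forall hslice
    · apply Integrable.mono' ((hfi.norm.mul_const Cg))
      · exact ((hFm.norm.stronglyMeasurable).integral_prod_right').aestronglyMeasurable
      · rw [hμ, ae_restrict_iff' measurableSet_Ioc]
        apply Filter.Eventually.of_forall
        intro y hy
        rw [Real.norm_eq_abs, abs_of_nonneg (integral_nonneg (fun s => norm_nonneg _))]
        refine le_trans (le_of_eq (hnormeq y hy)) ?_
        apply mul_le_mul_of_nonneg_left _ (norm_nonneg _)
        apply setIntegral_mono_set hgi.norm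
        · exact Filter.Eventually.of_forall fun t => norm_nonneg _
        · exact HasSubset.Subset.eventuallyLE (Set.Ioc_subset_Ioc le_rfl (by linarith [hy.1]))
  -- the swap
  have hswap := integral_integral_swap hprod
  -- identify LHS
  have hL : ∫ y in (0:ℝ)..x, f y * G (x - y) = ∫ y, (∫ s, F y s ∂μ) ∂μ := by
    rw [intervalIntegral.integral_of_le hx.le, hμ]
    apply setIntegral_congr_fun measurableSet_Ioc
    intro y hy
    obtain ⟨hy0, hyx⟩ := hy
    show f y * G (x - y) = ∫ s, F y s ∂μ
    have hind : (fun s => F y s) = Set.indicator (Set.Ioi y) (fun s => f y * g (s - y)) := by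
      funext s
      rw [Set.indicator_apply, hF]
      simp only [Set.mem_Ioi]
    rw [hind, hμ, integral_indicator measurableSet_Ioi,
      Measure.restrict_restrict measurableSet_Ioi, SA y hy0,
      ← intervalIntegral.integral_of_le hyx, intervalIntegral.integral_const_mul]
    congr 1
    · have := intervalIntegral.integral_comp_sub_right g y (a := y) (b := x)
      simp only [sub_self] at this
      rw [this, hG (x - y) (by linarith) (by linarith)]
  -- identify RHS
  have hR : ∫ s in (0:ℝ)..x, (∫ y in (0:ℝ)..s, f y * g (s - y))
      = ∫ s, (∫ y, F y s ∂μ) ∂μ := by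
    rw [intervalIntegral.integral_of_le hx.le, hμ]
    apply setIntegral_congr_fun measurableSet_Ioc
    intro s hs
    obtain ⟨hs0, hsx⟩ := hs
    show (∫ y in (0:ℝ)..s, f y * g (s - y)) = ∫ y, F y s ∂μ
    have hind : (fun y => F y s) = Set.indicator (Set.Iio s) (fun y => f y * g (s - y)) := by
      funext y
      rw [Set.indicator_apply, hF]
      simp only [Set.mem_Iio]
    rw [hind, hμ, integral_indicator measurableSet_Iio,
      Measure.restrict_restrict measurableSet_Iio, SB s hsx,
      intervalIntegral.integral_of_le hs0.le, integral_Ioc_eq_integral_Ioo]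
  rw [hL, hR]
  exact hswap

lemma cf0 : cf 0 = 1 := by
  rw [cf, Real.sqrt_eq_zero' .. |>.2 (by norm_num), erfc_eq le_rfl]
  simp

lemma gg0 : gg 0 = 0 := by simp [gg]

lemma gg_eq {y : ℝ} (hy : 0 < y) : gg y = y * aef y := by
  rw [gg, aef, ← mul_assoc]
  congr 1
  rw [show 2 * y / π = y^2 * (2 / (π * y)) by field_simp,
    Real.sqrt_mul (sq_nonneg y), Real.sqrt_sq hy.le]

lemma ftc {z : ℝ} (hz : 0 ≤ z) {Φ φ : ℝ → ℝ} (hc : Continuous Φ)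
    (hd : ∀ y ∈ Set.Ioo (0:ℝ) z, HasDerivAt Φ (φ y) y) (hi : IntervalIntegrable φ volume 0 z) :
    ∫ y in (0:ℝ)..z, φ y = Φ z - Φ 0 :=
  intervalIntegral.integral_eq_sub_of_hasDeriv_right_of_le hz hc.continuousOn
    (fun y hy => (hd y hy).hasDerivWithinAt) hi

lemma I1 {z : ℝ} (hz : 0 ≤ z) : ∫ y in (0:ℝ)..z, aef y = 2 - 2 * cf z := by
  have := ftc hz (Φ := fun y => -2 * cf y) (φ := aef)
    (continuous_const.mul continuous_cf)
    (fun y hy => by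
      have h := (hasDerivAt_cf hy.1).const_mul (-2)
      refine h.congr_deriv (Eq.symm ?_); ring)
    (intervalIntegrable_aef hz)
  simp only [this, cf0]; ring

lemma I2 {z : ℝ} (hz : 0 ≤ z) : ∫ y in (0:ℝ)..z, cf y = (z - 1) * cf z - gg z + 1 := by
  have := ftc hz (Φ := fun y => (y - 1) * cf y - gg y) (φ := cf)
    (((continuous_id.sub continuous_const).mul continuous_cf).sub continuous_gg)
    (fun y hy => by
      have h := (((hasDerivAt_id y).sub_const 1).mul (hasDerivAt_cf hy.1)).sub (hasDerivAt_gg hy.1)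
      refine h.congr_deriv (Eq.symm ?_)
      simp only [id_eq]
      linear_combination (-1/2 : ℝ) * gg_eq hy.1)
    (continuous_cf.intervalIntegrable 0 z)
  simp only [this, cf0, gg0]; ring

lemma I3 {z : ℝ} (hz : 0 ≤ z) : ∫ y in (0:ℝ)..z, gg y = -2 * cf z - 2 * gg z + 2 := by
  have := ftc hz (Φ := fun y => -2 * cf y - 2 * gg y) (φ := gg)
    ((continuous_const.mul continuous_cf).sub (continuous_const.mul continuous_gg))
    (fun y hy => by
      have h := ((hasDerivAt_cf hy.1).const_mul (-2)).sub ((hasDerivAt_gg hy.1).const_mul 2)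
      refine h.congr_deriv (Eq.symm ?_); ring)
    (continuous_gg.intervalIntegrable 0 z)
  simp only [this, cf0, gg0]; ring

lemma I4 {z : ℝ} (hz : 0 ≤ z) :
    ∫ y in (0:ℝ)..z, y * gg y = -6 * cf z - 6 * gg z - 2 * (z * gg z) + 6 := by
  have := ftc hz (Φ := fun y => -6 * cf y - 6 * gg y - 2 * (y * gg y)) (φ := fun y => y * gg y)
    (((continuous_const.mul continuous_cf).sub (continuous_const.mul continuous_gg)).sub
      (continuous_const.mul (continuous_id.mul continuous_gg)))
    (fun y hy => by
      have h := (((hasDerivAt_cf hy.1).const_mul (-6)).sub ((hasDerivAt_gg hy.1).const_mul 6)).sub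
        ((((hasDerivAt_id y).mul (hasDerivAt_gg hy.1))).const_mul 2)
      refine h.congr_deriv (Eq.symm ?_)
      simp only [id_eq]
      linear_combination (-1 : ℝ) * gg_eq hy.1)
    ((continuous_id.mul continuous_gg).intervalIntegrable 0 z)
  simp only [this, cf0, gg0]; ring

lemma I5 {z : ℝ} (hz : 0 ≤ z) :
    ∫ y in (0:ℝ)..z, y * cf y
      = (z^2 - 3) * cf z / 2 + 3/2 - (3 * gg z + z * gg z) / 2 := by
  have := ftc hz (Φ := fun y => (y^2 - 3) * cf y / 2 - (3 * gg y + y * gg y) / 2)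
    (φ := fun y => y * cf y)
    ((((continuous_pow 2 |>.sub continuous_const).mul continuous_cf).div_const 2).sub
      (((continuous_const.mul continuous_gg).add (continuous_id.mul continuous_gg)).div_const 2))
    (fun y hy => by
      have h := (((((hasDerivAt_pow 2 y).sub_const 3).mul (hasDerivAt_cf hy.1)).div_const 2).sub
        ((((hasDerivAt_gg hy.1).const_mul 3).add
          ((hasDerivAt_id y).mul (hasDerivAt_gg hy.1))).div_const 2))
      refine h.congr_deriv (Eq.symm ?_)
      simp only [id_eq]
      linear_combination (-(y+1)/4) * gg_eq hy.1)
    ((continuous_id.mul continuous_cf).intervalIntegrable 0 z)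
  simp only [this, cf0, gg0]; ring

lemma icongr_oo {a b : ℝ} (hab : a ≤ b) {f g : ℝ → ℝ} (h : ∀ s ∈ Set.Ioo a b, f s = g s) :
    ∫ s in a..b, f s = ∫ s in a..b, g s := by
  rw [intervalIntegral.integral_of_le hab, intervalIntegral.integral_of_le hab,
    integral_Ioc_eq_integral_Ioo, integral_Ioc_eq_integral_Ioo]
  exact setIntegral_congr_fun measurableSet_Ioo h

lemma measurable_cfshift {x : ℝ} : Measurable (fun y => cf (x - y)) :=
  continuous_cf.measurable.comp (measurable_const.sub measurable_id)

lemma intervalIntegrable_aefcf {x : ℝ} (hx : 0 < x) :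
    IntervalIntegrable (fun y => aef y * cf (x - y)) volume 0 x := by
  apply IntervalIntegrable.mono_fun (intervalIntegrable_aef hx.le)
    (measurable_aef.mul measurable_cfshift).aestronglyMeasurable
  filter_upwards [] with y
  simp only [Pi.mul_apply]
  rw [Real.norm_eq_abs, Real.norm_eq_abs, abs_of_nonneg (mul_nonneg (aef_nonneg y) (cf_nonneg _)),
    abs_of_nonneg (aef_nonneg y)]
  calc aef y * cf (x - y) ≤ aef y * 1 := mul_le_mul_of_nonneg_left (cf_le_one _) (aef_nonneg y)
    _ = aef y := mul_one _

lemma intervalIntegrable_cfaef {x : ℝ} (hx : 0 < x) :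
    IntervalIntegrable (fun y => cf y * aef (x - y)) volume 0 x := by
  have h1 : IntervalIntegrable (fun y => aef (x - y)) volume 0 x := by
    simpa using ((intervalIntegrable_aef hx.le).comp_sub_left x).symm
  have hm : Measurable (fun y => cf y * aef (x - y)) :=
    continuous_cf.measurable.mul (measurable_aef.comp (measurable_const.sub measurable_id))
  apply IntervalIntegrable.mono_fun h1 hm.aestronglyMeasurable
  filter_upwards [] with y
  rw [Real.norm_eq_abs, Real.norm_eq_abs, abs_of_nonneg (mul_nonneg (cf_nonneg y) (aef_nonneg _)),
    abs_of_nonneg (aef_nonneg _)]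
  calc cf y * aef (x - y) ≤ 1 * aef (x - y) := mul_le_mul_of_nonneg_right (cf_le_one _) (aef_nonneg _)
    _ = aef (x - y) := one_mul _

lemma IE {z : ℝ} (hz : 0 ≤ z) :
    ∫ s in (0:ℝ)..z, 2 * Real.exp (-s / 2) = 4 - 4 * Real.exp (-z / 2) := by
  have h : ∀ s ∈ Set.Ioo (0:ℝ) z, HasDerivAt (fun s => -4 * Real.exp (-s / 2))
      (2 * Real.exp (-s / 2)) s := by
    intro s _
    have h1 : HasDerivAt (fun s : ℝ => -s / 2) (-1 / 2 : ℝ) s := by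
      simpa using ((hasDerivAt_id s).neg).div_const 2
    have := ((Real.hasDerivAt_exp _).comp s h1).const_mul (-4)
    refine this.congr_deriv (Eq.symm ?_); ring
  have := intervalIntegral.integral_eq_sub_of_hasDeriv_right_of_le hz
    (Continuous.continuousOn (by continuity))
    (fun s hs => (h s hs).hasDerivWithinAt)
    ((Continuous.intervalIntegrable (by continuity)) 0 z)
  simp only [this]
  norm_num
  ring

lemma refl_lemma {s : ℝ} (f g : ℝ → ℝ) :
    ∫ y in (0:ℝ)..s, f y * g (s - y) = ∫ y in (0:ℝ)..s, g y * f (s - y) := by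
  have h := intervalIntegral.integral_comp_sub_left (fun y => g y * f (s - y)) s (a := 0) (b := s)
  simp only [sub_zero, sub_self] at h
  rw [← h]
  apply intervalIntegral.integral_congr
  intro y _
  simp only [sub_sub_cancel]
  ring

lemma J2 {x : ℝ} (hx : 0 < x) :
    ∫ y in (0:ℝ)..x, aef y * cf (x - y) = 2 * Real.exp (-x / 2) - 2 * cf x := by
  have hIO : IntegrableOn aef (Set.Ioc 0 x) := by
    rw [← intervalIntegrable_iff_integrableOn_Ioc_of_le hx.le]
    exact intervalIntegrable_aef hx.le
  have hswap := swap_lemma hx (f := aef) (g := aef) (G := fun z => 2 - 2 * cf z)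
    measurable_aef measurable_aef hIO hIO (fun z hz0 _ => (I1 hz0).symm)
  have hRHS : ∫ s in (0:ℝ)..x, ∫ y in (0:ℝ)..s, aef y * aef (s - y)
      = 4 - 4 * Real.exp (-x / 2) := by
    rw [icongr hx.le (fun s hs => conv_aef_aef hs.1), IE hx.le]
  have hLHS : ∫ y in (0:ℝ)..x, aef y * (2 - 2 * cf (x - y))
      = 2 * (2 - 2 * cf x) - 2 * ∫ y in (0:ℝ)..x, aef y * cf (x - y) := by
    rw [icongr hx.le (f := fun y => aef y * (2 - 2 * cf (x - y)))
      (g := fun y => 2 * aef y - 2 * (aef y * cf (x - y))) (fun y _ => by ring)]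
    rw [intervalIntegral.integral_sub ((intervalIntegrable_aef hx.le).const_mul 2)
      ((intervalIntegrable_aefcf hx).const_mul 2),
      intervalIntegral.integral_const_mul, intervalIntegral.integral_const_mul, I1 hx.le]
  rw [hswap, hRHS] at hLHS
  linarith

lemma J3 {x : ℝ} (hx : 0 < x) :
    ∫ y in (0:ℝ)..x, cf y * cf (x - y)
      = 2 * (x - 1) * cf x - 2 * gg x + 2 * Real.exp (-x / 2) := by
  have hIOa : IntegrableOn aef (Set.Ioc 0 x) := by
    rw [← intervalIntegrable_iff_integrableOn_Ioc_of_le hx.le]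
    exact intervalIntegrable_aef hx.le
  have hIOc : IntegrableOn cf (Set.Ioc 0 x) := by
    rw [← intervalIntegrable_iff_integrableOn_Ioc_of_le hx.le]
    exact continuous_cf.intervalIntegrable 0 x
  have hswap := swap_lemma hx (f := cf) (g := aef) (G := fun z => 2 - 2 * cf z)
    continuous_cf.measurable measurable_aef hIOc hIOa (fun z hz0 _ => (I1 hz0).symm)
  have hRHS : ∫ s in (0:ℝ)..x, ∫ y in (0:ℝ)..s, cf y * aef (s - y)
      = (4 - 4 * Real.exp (-x / 2)) - 2 * ((x - 1) * cf x - gg x + 1) := by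
    rw [icongr hx.le (fun s hs => by rw [refl_lemma cf aef, J2 hs.1])]
    rw [icongr hx.le (f := fun s => 2 * Real.exp (-s/2) - 2 * cf s)
      (g := fun s => 2 * Real.exp (-s/2) - 2 * cf s) (fun s _ => rfl)]
    rw [intervalIntegral.integral_sub ((Continuous.intervalIntegrable (by continuity)) 0 x)
      ((continuous_cf.intervalIntegrable 0 x).const_mul 2),
      IE hx.le, intervalIntegral.integral_const_mul, I2 hx.le]
  have hLHS : ∫ y in (0:ℝ)..x, cf y * (2 - 2 * cf (x - y))
      = 2 * ((x - 1) * cf x - gg x + 1) - 2 * ∫ y in (0:ℝ)..x, cf y * cf (x - y) := by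
    rw [icongr hx.le (f := fun y => cf y * (2 - 2 * cf (x - y)))
      (g := fun y => 2 * cf y - 2 * (cf y * cf (x - y))) (fun y _ => by ring)]
    have hcont : Continuous (fun y : ℝ => cf y * cf (x - y)) :=
      continuous_cf.mul (continuous_cf.comp (continuous_const.sub continuous_id))
    rw [intervalIntegral.integral_sub ((continuous_cf.intervalIntegrable 0 x).const_mul 2)
      ((hcont.intervalIntegrable 0 x).const_mul 2),
      intervalIntegral.integral_const_mul, intervalIntegral.integral_const_mul, I2 hx.le]
  rw [hswap, hRHS] at hLHS
  linarith

lemma convW {x : ℝ} (hx : 0 < x) :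
    ∫ y in (0:ℝ)..x, (aef y - cf y) * (aef (x - y) - cf (x - y))
      = (2 * x + 2) * cf x - 2 * gg x := by
  have hi1 := intervalIntegrable_aefaef hx
  have hi2 := intervalIntegrable_aefcf hx
  have hi3 := intervalIntegrable_cfaef hx
  have hcont4 : Continuous (fun y : ℝ => cf y * cf (x - y)) :=
    continuous_cf.mul (continuous_cf.comp (continuous_const.sub continuous_id))
  have hi4 : IntervalIntegrable (fun y => cf y * cf (x - y)) volume 0 x :=
    hcont4.intervalIntegrable 0 x
  rw [icongr hx.le (f := fun y => (aef y - cf y) * (aef (x - y) - cf (x - y)))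
    (g := fun y => (aef y * aef (x - y) - aef y * cf (x - y)) - (cf y * aef (x - y) - cf y * cf (x - y)))
    (fun y _ => by ring)]
  rw [intervalIntegral.integral_sub (hi1.sub hi2) (hi3.sub hi4),
    intervalIntegral.integral_sub hi1 hi2, intervalIntegral.integral_sub hi3 hi4,
    conv_aef_aef hx, J2 hx, J3 hx, refl_lemma cf aef, J2 hx]
  ring

lemma gg_nonneg (z : ℝ) : 0 ≤ gg z := mul_nonneg (Real.sqrt_nonneg _) (Real.exp_pos _).le

lemma gg_le {z x : ℝ} (h0 : 0 ≤ z) (hzx : z ≤ x) : gg z ≤ Real.sqrt (2 * x / π) := by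
  rw [gg]
  calc Real.sqrt (2 * z / π) * Real.exp (-z / 2)
      ≤ Real.sqrt (2 * z / π) * 1 := by
        apply mul_le_mul_of_nonneg_left (Real.exp_le_one_iff.2 (by linarith)) (Real.sqrt_nonneg _)
    _ = Real.sqrt (2 * z / π) := mul_one _
    _ ≤ Real.sqrt (2 * x / π) := by
        have := Real.pi_pos
        apply Real.sqrt_le_sqrt
        gcongr

noncomputable def IUf (z : ℝ) : ℝ := 1 - (z + 1) * cf z + gg z

lemma hIUf {z : ℝ} (hz0 : 0 ≤ z) : IUf z = ∫ t in (0:ℝ)..z, (aef t - cf t) := by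
  rw [intervalIntegral.integral_sub (intervalIntegrable_aef hz0)
    (continuous_cf.intervalIntegrable 0 z), I1 hz0, I2 hz0, IUf]
  ring

lemma intervalIntegrable_U {b : ℝ} (hb : 0 ≤ b) :
    IntervalIntegrable (fun y => aef y - cf y) volume 0 b :=
  (intervalIntegrable_aef hb).sub (continuous_cf.intervalIntegrable 0 b)

lemma intWf {x : ℝ} (hx : 0 < x) :
    ∫ s in (0:ℝ)..x, ((2 * s + 2) * cf s - 2 * gg s)
      = (x^2 + 2*x - 1) * cf x - gg x - x * gg x + 1 := by
  rw [icongr hx.le (f := fun s => (2 * s + 2) * cf s - 2 * gg s)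
    (g := fun s => 2 * (s * cf s) + (2 * cf s - 2 * gg s)) (fun s _ => by ring)]
  have hc1 : Continuous (fun s : ℝ => s * cf s) := continuous_id.mul continuous_cf
  rw [intervalIntegral.integral_add ((hc1.intervalIntegrable 0 x).const_mul 2)
    (((continuous_cf.intervalIntegrable 0 x).const_mul 2).sub
      ((continuous_gg.intervalIntegrable 0 x).const_mul 2)),
    intervalIntegral.integral_const_mul,
    intervalIntegral.integral_sub ((continuous_cf.intervalIntegrable 0 x).const_mul 2)
      ((continuous_gg.intervalIntegrable 0 x).const_mul 2),
    intervalIntegral.integral_const_mul, intervalIntegral.integral_const_mul,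
    I5 hx.le, I2 hx.le, I3 hx.le]
  ring

lemma main_conv {x : ℝ} (hx : 0 < x) :
    ∫ y in (0:ℝ)..x, (aef y - cf y) * ((2 * (x - y) + 2) * cf (x - y) - 2 * gg (x - y))
      = 2 * gg x * (2 + x) - (2 * x^2 + 6 * x) * cf x := by
  have hUm : Measurable (fun y => aef y - cf y) := measurable_aef.sub continuous_cf.measurable
  have hIO : IntegrableOn (fun y => aef y - cf y) (Set.Ioc 0 x) := by
    rw [← intervalIntegrable_iff_integrableOn_Ioc_of_le hx.le]
    exact intervalIntegrable_U hx.le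
  set M : ℝ := x + 2 + Real.sqrt (2 * x / π) with hM
  have hIUfbd : ∀ z : ℝ, 0 ≤ z → z ≤ x → |IUf z| ≤ M := by
    intro z h0 hzx
    rw [abs_le, IUf, hM]
    have h1 := cf_nonneg z
    have h2 := cf_le_one z
    have h3 := gg_nonneg z
    have h4 := gg_le h0 hzx
    have h5 : 0 ≤ (z + 1) * cf z := mul_nonneg (by linarith) h1
    have h6 : (z + 1) * cf z ≤ z + 1 := by nlinarith
    constructor <;> nlinarith [Real.sqrt_nonneg (2 * x / π)]
  have hiUI : IntervalIntegrable (fun y => (aef y - cf y) * IUf (x - y)) volume 0 x := by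
    have hIUc : Continuous IUf := by
      apply Continuous.add (Continuous.sub continuous_const
        ((continuous_id.add continuous_const).mul continuous_cf)) continuous_gg
    have hm : Measurable (fun y => (aef y - cf y) * IUf (x - y)) :=
      hUm.mul (hIUc.measurable.comp (measurable_const.sub measurable_id))
    apply IntervalIntegrable.mono_fun ((intervalIntegrable_U hx.le).norm.mul_const M)
      hm.aestronglyMeasurable
    filter_upwards [ae_restrict_mem measurableSet_uIoc] with y hy
    rw [Set.uIoc_of_le hx.le, Set.mem_Ioc] at hy
    have hM0 : (0:ℝ) ≤ M := by rw [hM]; positivity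
    rw [Real.norm_eq_abs, Real.norm_eq_abs, abs_mul, abs_mul, Real.norm_eq_abs, abs_abs, abs_of_nonneg hM0]
    exact mul_le_mul_of_nonneg_left (hIUfbd (x - y) (by linarith [hy.2]) (by linarith [hy.1]))
      (abs_nonneg _)
  have step1 : ∫ y in (0:ℝ)..x, (aef y - cf y) * ((2 * (x - y) + 2) * cf (x - y) - 2 * gg (x - y))
      = ∫ y in (0:ℝ)..x, (2 * (aef y - cf y) - 2 * ((aef y - cf y) * IUf (x - y))) := by
    apply icongr hx.le
    intro y _
    simp only [IUf]
    ring
  have hswap' : ∫ y in (0:ℝ)..x, (aef y - cf y) * IUf (x - y)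
      = ∫ s in (0:ℝ)..x, ∫ y in (0:ℝ)..s, (aef y - cf y) * (aef (s - y) - cf (s - y)) :=
    swap_lemma hx (f := fun y => aef y - cf y) (g := fun y => aef y - cf y)
      (G := IUf) hUm hUm hIO hIO (fun z hz0 _ => hIUf hz0)
  have hinner : ∫ s in (0:ℝ)..x, ∫ y in (0:ℝ)..s, (aef y - cf y) * (aef (s - y) - cf (s - y))
      = (x^2 + 2*x - 1) * cf x - gg x - x * gg x + 1 := by
    rw [icongr hx.le (fun s hs => convW hs.1), intWf hx]
  rw [step1, intervalIntegral.integral_sub ((intervalIntegrable_U hx.le).const_mul 2)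
    (hiUI.const_mul 2), intervalIntegral.integral_const_mul,
    intervalIntegral.integral_const_mul, ← hIUf hx.le, hswap', hinner, IUf]
  ring

end S11

open S11

theorem stmt11 (U : ℝ → ℝ)
    (hU : ∀ x : ℝ, U x = Real.sqrt (2 / (π * x)) * Real.exp (-x / 2) - erfc (Real.sqrt (x / 2)))
    (x : ℝ) (hx : 0 < x) :
    convPow U 3 x =
      2 * Real.sqrt (2 * x / π) * Real.exp (-x / 2) * (2 + x)
        - (2 * x ^ 2 + 6 * x) * erfc (Real.sqrt (x / 2)) := by
  have hU' : U = fun z => aef z - cf z := funext fun z => hU z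
  rw [hU']
  have h0 : convPow (fun z => aef z - cf z) 3 x
      = ∫ y in (0:ℝ)..x, (aef y - cf y) *
          (∫ t in (0:ℝ)..(x - y), (aef t - cf t) * (aef (x - y - t) - cf (x - y - t))) := rfl
  rw [h0]
  rw [icongr_oo hx.le
    (f := fun y => (aef y - cf y) *
      (∫ t in (0:ℝ)..(x - y), (aef t - cf t) * (aef (x - y - t) - cf (x - y - t))))
    (g := fun y => (aef y - cf y) * ((2 * (x - y) + 2) * cf (x - y) - 2 * gg (x - y)))
    (fun y hy => by beta_reduce; rw [convW (show (0:ℝ) < x - y by linarith [hy.2])])]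
  rw [main_conv hx]
  simp only [gg, cf]
  ring
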